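/- Let X be a PSCA(t+1, t, 1) and 0 ≤ i ≤ t. Then for every symbol w ∈ [t+1], d_w(i) is divisible by the binomial coefficient C(t, i). -/

import Mathlib

open scoped Classical

/-- A permutation `π` of `[v]` covers a sequence `s` of `t` distinct symbols if the
symbols appear in `π` in the given order, i.e. `π⁻¹(s 0) < ⋯ < π⁻¹(s (t-1))`. -/
def Covers {v t : ℕ} (π : Equiv.Perm (Fin v)) (s : Fin t → Fin v) : Prop :=
  StrictMono fun i => π.symm (s i)

/-- `X` is a perfect sequence covering array PSCA(v, t, λ): every sequence of `t`
distinct symbols of `[v]` is covered by exactly `λ` permutations of `X` (with multiplicity). -/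
def IsPSCA (v t l : ℕ) (X : Multiset (Equiv.Perm (Fin v))) : Prop :=
  ∀ s : Fin t → Fin v, Function.Injective s → X.countP (fun π => Covers π s) = l

/-- `dcount v X w j` is the number of permutations `π` in `X` (with multiplicity)
such that `π(j) = w`. -/
noncomputable def dcount (v : ℕ) (X : Multiset (Equiv.Perm (Fin v))) (w : Fin v) (j : ℕ) : ℕ :=
  X.countP fun π => ∃ p : Fin v, (p : ℕ) = j ∧ π p = w

-- aux 1: indicator sum = countP
lemma sum_ind {β : Type*} (X : Multiset β) (q : β → Prop) [DecidablePred q] :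
    (X.map fun b => if q b then 1 else 0).sum = X.countP q := by
  induction X using Multiset.induction with
  | empty => simp
  | cons b X ih => simp [Multiset.countP_cons, ih, add_comm]

-- aux 2: swap double count
lemma sum_countP_eq {α β : Type*} (F : Finset α) (X : Multiset β) (p : β → α → Prop)
    [∀ b, DecidablePred (p b)] [∀ a, DecidablePred (fun b => p b a)] :
    ∑ s ∈ F, X.countP (fun b => p b s) = (X.map fun b => (F.filter (p b)).card).sum := by
  induction X using Multiset.induction with
  | empty => simp
  | cons b X ih =>
    simp only [Multiset.countP_cons, Multiset.map_cons, Multiset.sum_cons,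
      Finset.sum_add_distrib, ih, Finset.card_filter]
    ring

-- aux 3: classification of strictly monotone maps
lemma strictMono_eq_succAbove {n : ℕ} {g : Fin n → Fin (n+1)} (hg : StrictMono g) :
    ∃ k : Fin (n+1), g = k.succAbove := by
  have hinj : Function.Injective g := hg.injective
  have hns : ¬ Function.Surjective g := by
    intro hs
    have := Fintype.card_le_of_surjective g hs
    simp at this
  rw [Function.Surjective] at hns
  push_neg at hns
  obtain ⟨k, hk⟩ := hns
  refine ⟨k, ?_⟩
  have hr : Set.range g = Set.range (Fin.succAbove k) := by
    rw [Fin.range_succAbove]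
    apply Set.eq_of_subset_of_card_le
    · intro x hx
      obtain ⟨y, rfl⟩ := hx
      exact fun h => hk y h
    · rw [Set.card_range_of_injective hinj, Fintype.card_compl_set, Set.card_singleton,
        Fintype.card_fin, Fintype.card_fin]
      omega
  haveI : WellFoundedLT (Fin n) := inferInstance
  exact (StrictMono.range_inj hg (Fin.strictMono_succAbove k)).mp hr

lemma succAbove_eq_castSucc_iff {n : ℕ} (k : Fin (n+1)) (i : Fin n) :
    k.succAbove i = i.castSucc ↔ i.castSucc < k := by
  constructor
  · intro h
    by_contra hlt
    rw [Fin.succAbove_of_le_castSucc _ _ (not_lt.mp hlt)] at h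
    exact absurd h.symm (Fin.castSucc_lt_succ : i.castSucc < i.succ).ne
  · exact Fin.succAbove_of_castSucc_lt k i

lemma succAbove_eq_succ_iff {n : ℕ} (k : Fin (n+1)) (i : Fin n) :
    k.succAbove i = i.succ ↔ k ≤ i.castSucc := by
  constructor
  · intro h
    by_contra hlt
    rw [Fin.succAbove_of_castSucc_lt _ _ (not_le.mp hlt)] at h
    exact absurd h (Fin.castSucc_lt_succ : i.castSucc < i.succ).ne
  · exact Fin.succAbove_of_le_castSucc k i

lemma card_filter_covers (t : ℕ) (w : Fin (t+1)) (i0 : Fin t) (π : Equiv.Perm (Fin (t+1))) :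
    (((Finset.univ : Finset (Fin t → Fin (t+1))).filter
        (fun s => Function.Injective s ∧ s i0 = w)).filter (fun s => Covers π s)).card
      = (t - (i0 : ℕ)) * (if π i0.castSucc = w then 1 else 0)
        + ((i0 : ℕ) + 1) * (if π i0.succ = w then 1 else 0) := by
  classical
  set F := (Finset.univ : Finset (Fin t → Fin (t+1))).filter
      (fun s => Function.Injective s ∧ s i0 = w) with hF
  set K := (Finset.univ : Finset (Fin (t+1))).filter
      (fun k => k.succAbove i0 = π.symm w) with hK
  have hcard : K.card = (F.filter (fun s => Covers π s)).card := by
    apply Finset.card_bij (fun k _ => π ∘ k.succAbove)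
    · intro k hk
      simp only [hK, Finset.mem_filter, Finset.mem_univ, true_and] at hk
      simp only [hF, Finset.mem_filter, Finset.mem_univ, true_and]
      refine ⟨⟨π.injective.comp Fin.succAbove_right_injective, ?_⟩, ?_⟩
      · simp [Function.comp, hk]
      · unfold Covers
        simpa using Fin.strictMono_succAbove k
    · intro k1 h1 k2 h2 h
      apply Fin.succAbove_left_injective
      funext j
      have := congrFun h j
      simpa using π.injective this
    · intro s hs
      simp only [hF, Finset.mem_filter, Finset.mem_univ, true_and] at hs
      obtain ⟨⟨hinj, hval⟩, hcov⟩ := hs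
      obtain ⟨k, hk⟩ := strictMono_eq_succAbove hcov
      refine ⟨k, ?_, ?_⟩
      · simp only [hK, Finset.mem_filter, Finset.mem_univ, true_and]
        rw [← congrFun hk i0, hval]
      · funext j
        have := congrFun hk j
        simp [← this]
  rw [← hcard]
  have hπ : ∀ x : Fin (t+1), (π x = w) ↔ (x = π.symm w) := by
    intro x; rw [Equiv.apply_eq_iff_eq_symm_apply]
  have hne : i0.castSucc ≠ i0.succ := (Fin.castSucc_lt_succ : i0.castSucc < i0.succ).ne
  rcases eq_or_ne (π.symm w) i0.castSucc with hc | hc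
  · have hK2 : K = Finset.Ioi i0.castSucc := by
      ext k
      simp only [hK, Finset.mem_filter, Finset.mem_univ, true_and, Finset.mem_Ioi, hc,
        succAbove_eq_castSucc_iff]
    rw [hK2, Fin.card_Ioi]
    rw [if_pos ((hπ _).mpr hc.symm), if_neg (fun h => hne ((hc ▸ (hπ _).mp h)).symm)]
    simp [Fin.coe_castSucc]
  · rcases eq_or_ne (π.symm w) i0.succ with hc2 | hc2
    · have hK2 : K = Finset.Iic i0.castSucc := by
        ext k
        simp only [hK, Finset.mem_filter, Finset.mem_univ, true_and, Finset.mem_Iic, hc2,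
          succAbove_eq_succ_iff]
      rw [hK2, Fin.card_Iic]
      rw [if_neg (fun h => hc ((hπ _).mp h ▸ rfl)), if_pos ((hπ _).mpr hc2.symm)]
      simp [Fin.coe_castSucc]
    · have hK2 : K = ∅ := by
        ext k
        simp only [hK, Finset.mem_filter, Finset.mem_univ, true_and, Finset.notMem_empty,
          iff_false]
        intro h
        rcases lt_or_ge i0.castSucc k with hlt | hle
        · rw [Fin.succAbove_of_castSucc_lt _ _ hlt] at h
          exact hc h.symm
        · rw [Fin.succAbove_of_le_castSucc _ _ hle] at h
          exact hc2 h.symm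
      rw [hK2]
      rw [if_neg (fun h => hc ((hπ _).mp h).symm), if_neg (fun h => hc2 ((hπ _).mp h).symm)]
      simp

lemma card_F (t : ℕ) (ht : 1 ≤ t) (w : Fin (t+1)) (i0 : Fin t) :
    ((Finset.univ : Finset (Fin t → Fin (t+1))).filter
        (fun s => Function.Injective s ∧ s i0 = w)).card = Nat.factorial t := by
  classical
  rw [← Fintype.card_subtype]
  have e : {s : Fin t → Fin (t+1) // Function.Injective s ∧ s i0 = w} ≃
      ({j : Fin t // j ≠ i0} ↪ {x : Fin (t+1) // x ≠ w}) :=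
    { toFun := fun s => ⟨fun j => ⟨s.1 j.1, fun h => j.2 (s.2.1 (h.trans s.2.2.symm))⟩,
        fun a b hab => Subtype.ext (s.2.1 (congrArg Subtype.val hab))⟩
      invFun := fun f => ⟨fun j => if h : j = i0 then w else (f ⟨j, h⟩).1, by
        constructor
        · intro a b hab
          dsimp only at hab
          by_cases ha : a = i0 <;> by_cases hb : b = i0
          · rw [ha, hb]
          · rw [dif_pos ha, dif_neg hb] at hab
            exact absurd hab.symm (f ⟨b, hb⟩).2
          · rw [dif_neg ha, dif_pos hb] at hab
            exact absurd hab (f ⟨a, ha⟩).2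
          · rw [dif_neg ha, dif_neg hb] at hab
            have := f.injective (Subtype.ext hab)
            exact Subtype.ext_iff.mp this
        · exact dif_pos rfl⟩
      left_inv := by
        intro s
        apply Subtype.ext
        funext j
        by_cases h : j = i0
        · simp only [dif_pos h]
          rw [h, s.2.2]
        · simp only [dif_neg h]
          rfl
      right_inv := by
        intro f
        ext j
        simp only [Function.Embedding.coeFn_mk]
        simp [j.2] }
  rw [Fintype.card_congr e, Fintype.card_embedding_eq]
  have h1 : Fintype.card {j : Fin t // j ≠ i0} = t - 1 := by
    simp [Fintype.card_subtype_compl]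
  have h2 : Fintype.card {x : Fin (t+1) // x ≠ w} = t := by
    simp [Fintype.card_subtype_compl]
  rw [h1, h2, Nat.descFactorial_eq_div (by omega)]
  have : t - (t - 1) = 1 := by omega
  rw [this]
  simp

lemma dcount_eq_countP (t : ℕ) (X : Multiset (Equiv.Perm (Fin (t+1)))) (w : Fin (t+1))
    (j : Fin (t+1)) : dcount (t+1) X w (j : ℕ) = X.countP (fun π => π j = w) := by
  classical
  unfold dcount
  apply Multiset.countP_congr rfl
  intro π _
  apply propext
  constructor
  · rintro ⟨p, hp, hpw⟩
    rwa [show p = j from Fin.ext hp] at hpw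
  · intro h
    exact ⟨j, rfl, h⟩

lemma key_identity (t : ℕ) (ht : 1 ≤ t) (X : Multiset (Equiv.Perm (Fin (t+1))))
    (hX : IsPSCA (t+1) t 1 X) (w : Fin (t+1)) (i : ℕ) (hi : i < t) :
    (t - i) * dcount (t+1) X w i + (i+1) * dcount (t+1) X w (i+1) = Nat.factorial t := by
  classical
  set i0 : Fin t := ⟨i, hi⟩ with hi0
  set F := (Finset.univ : Finset (Fin t → Fin (t+1))).filter
      (fun s => Function.Injective s ∧ s i0 = w) with hF
  have h1 : ∑ s ∈ F, X.countP (fun π => Covers π s) = F.card := by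
    rw [Finset.card_eq_sum_ones]
    apply Finset.sum_congr rfl
    intro s hs
    simp only [hF, Finset.mem_filter, Finset.mem_univ, true_and] at hs
    exact hX s hs.1
  have h2 : ∑ s ∈ F, X.countP (fun π => Covers π s)
      = (X.map fun π => (F.filter (fun s => Covers π s)).card).sum :=
    sum_countP_eq F X (fun π s => Covers π s)
  have h3 : (X.map fun π => (F.filter (fun s => Covers π s)).card).sum
      = (t - i) * X.countP (fun π => π i0.castSucc = w)
        + (i + 1) * X.countP (fun π => π i0.succ = w) := by
    have hmap : (X.map fun π => (F.filter (fun s => Covers π s)).card)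
        = X.map (fun π => (t - i) * (if π i0.castSucc = w then 1 else 0)
            + (i + 1) * (if π i0.succ = w then 1 else 0)) := by
      apply Multiset.map_congr rfl
      intro π _
      have := card_filter_covers t w i0 π
      simpa [hF, hi0] using this
    rw [hmap, Multiset.sum_map_add, Multiset.sum_map_mul_left, Multiset.sum_map_mul_left,
      sum_ind, sum_ind]
  have h4 : dcount (t+1) X w i = X.countP (fun π => π i0.castSucc = w) := by
    have := dcount_eq_countP t X w i0.castSucc
    simpa [hi0] using this
  have h5 : dcount (t+1) X w (i+1) = X.countP (fun π => π i0.succ = w) := by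
    have := dcount_eq_countP t X w i0.succ
    simpa [hi0] using this
  rw [h4, h5, ← h3, ← h2, h1, hF]
  exact card_F t ht w i0


/-- Corollary 2.6: in a PSCA(t+1, t, 1), `C(t, i)` divides `d_w(i)` for every symbol `w`. -/
theorem stmt9 (t : ℕ) (ht : 2 ≤ t)
    (X : Multiset (Equiv.Perm (Fin (t + 1)))) (hX : IsPSCA (t + 1) t 1 X)
    (i : ℕ) (hi : i ≤ t) (w : Fin (t + 1)) :
    Nat.choose t i ∣ dcount (t + 1) X w i := by
  suffices h : ∀ j, j ≤ t → (Nat.choose t j : ℤ) ∣ (dcount (t+1) X w j : ℤ) by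
    exact_mod_cast h i hi
  intro j
  induction j with
  | zero => intro _; simp
  | succ j ih =>
    intro hj1
    have hjt : j < t := hj1
    obtain ⟨a, ha⟩ := ih hjt.le
    have hk := key_identity t (by omega) X hX w j hjt
    have hZ : ((t : ℤ) - j) * (dcount (t+1) X w j : ℤ)
        + ((j : ℤ) + 1) * (dcount (t+1) X w (j+1) : ℤ) = (Nat.factorial t : ℤ) := by
      have := congrArg (fun n : ℕ => (n : ℤ)) hk
      push_cast [Nat.cast_sub hjt.le] at this
      linarith [this]
    have hc1 : ((j : ℤ) + 1) * (Nat.choose t (j+1) : ℤ)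
        = (Nat.choose t j : ℤ) * ((t : ℤ) - j) := by
      have h := Nat.choose_succ_right_eq t j
      have := congrArg (fun n : ℕ => (n : ℤ)) h
      push_cast [Nat.cast_sub hjt.le] at this
      linarith [this]
    have hc2 : (Nat.factorial t : ℤ) = ((j : ℤ) + 1) * (Nat.choose t (j+1) : ℤ)
        * ((Nat.factorial j : ℤ) * (Nat.factorial (t - (j+1)) : ℤ)) := by
      have h := Nat.choose_mul_factorial_mul_factorial hj1
      have h2 : Nat.factorial (j+1) = (j+1) * Nat.factorial j := Nat.factorial_succ j
      have := congrArg (fun n : ℕ => (n : ℤ)) h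
      push_cast [h2] at this
      linarith [this]
    refine ⟨(Nat.factorial j : ℤ) * (Nat.factorial (t - (j+1)) : ℤ) - a, ?_⟩
    have hne : ((j : ℤ) + 1) ≠ 0 := by positivity
    apply mul_left_cancel₀ hne
    linear_combination hZ - ((t : ℤ) - j) * ha + a * hc1 + hc2
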